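/- In Q_2 (generated by z_1 = z_{∅,1}, z_2 = z_{∅,2}, z_{1,2} = z_{{1},2}, z_{2,1} = z_{{2},1} with relations z_{1,2}+z_1 = z_{2,1}+z_2 and z_{1,2}z_1 = z_{2,1}z_2), the elements Λ = z_1 + z_{1,2}, u = z_{1,2} - z_2, ξ = z_1 - z_2 satisfy [Λ, ξ] + (uξ + ξu) = 0, where [a,b] = ab - ba. -/
import Mathlib


namespace QnPaper

/-- The defining relations of the quadratic algebra `Q_n`:
for `A ⊆ {1,…,n}` and distinct `i, j ∉ A`,
`z_{A∪{i},j} + z_{A,i} = z_{A∪{j},i} + z_{A,j}` and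
`z_{A∪{i},j} * z_{A,i} = z_{A∪{j},i} * z_{A,j}`. -/
inductive QRel (k : Type) [Field k] (n : ℕ) :
    FreeAlgebra k (Finset (Fin n) × Fin n) → FreeAlgebra k (Finset (Fin n) × Fin n) → Prop
  | add_rel (A : Finset (Fin n)) (i j : Fin n) (hi : i ∉ A) (hj : j ∉ A) (hij : i ≠ j) :
      QRel k n (FreeAlgebra.ι k (insert i A, j) + FreeAlgebra.ι k (A, i))
        (FreeAlgebra.ι k (insert j A, i) + FreeAlgebra.ι k (A, j))
  | mul_rel (A : Finset (Fin n)) (i j : Fin n) (hi : i ∉ A) (hj : j ∉ A) (hij : i ≠ j) :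
      QRel k n (FreeAlgebra.ι k (insert i A, j) * FreeAlgebra.ι k (A, i))
        (FreeAlgebra.ι k (insert j A, i) * FreeAlgebra.ι k (A, j))

/-- The quadratic algebra `Q_n`. -/
abbrev Q (k : Type) [Field k] (n : ℕ) := RingQuot (QRel k n)

/-- The generator `z_{A,i}` of `Q_n` (only meaningful when `i ∉ A`). -/
def z (k : Type) [Field k] (n : ℕ) (A : Finset (Fin n)) (i : Fin n) : Q k n :=
  RingQuot.mkAlgHom k (QRel k n) (FreeAlgebra.ι k (A, i))
lemma aux {R : Type*} [Ring R] (a b c d : R) (hc : c = d + b - a)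
    (h2 : c * a = d * b) :
    ((a + c) * (a - b) - (a - b) * (a + c)) + ((c - b) * (a - b) + (a - b) * (c - b)) = 0 := by
  subst hc
  have key : ((a + (d + b - a)) * (a - b) - (a - b) * (a + (d + b - a))) +
      ((d + b - a - b) * (a - b) + (a - b) * (d + b - a - b))
      = 2 * ((d + b - a) * a - d * b) := by noncomm_ring
  rw [key, h2, sub_self, mul_zero]

/-- In `Q_2`, with `Λ = z₁ + z_{1,2}`, `u = z_{1,2} - z₂`, `ξ = z₁ - z₂`:
`[Λ, ξ] + (uξ + ξu) = 0`. -/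
theorem stmt19 (k : Type) [Field k] (Λ u ξ : Q k 2)
    (hΛ : Λ = z k 2 ∅ 0 + z k 2 {0} 1)
    (hu : u = z k 2 {0} 1 - z k 2 ∅ 1)
    (hξ : ξ = z k 2 ∅ 0 - z k 2 ∅ 1) :
    (Λ * ξ - ξ * Λ) + (u * ξ + ξ * u) = 0 := by
  subst hΛ hu hξ
  have h1 : z k 2 {0} 1 + z k 2 ∅ 0 = z k 2 {1} 0 + z k 2 ∅ 1 := by
    have h := RingQuot.mkAlgHom_rel k
      (QRel.add_rel (k := k) (n := 2) ∅ 0 1 (by simp) (by simp) (by decide))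
    simpa [z, map_add] using h
  have h2 : z k 2 {0} 1 * z k 2 ∅ 0 = z k 2 {1} 0 * z k 2 ∅ 1 := by
    have h := RingQuot.mkAlgHom_rel k
      (QRel.mul_rel (k := k) (n := 2) ∅ 0 1 (by simp) (by simp) (by decide))
    simpa [z, map_mul] using h
  exact aux _ _ _ _ (eq_sub_of_add_eq h1) h2
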